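/- Let n ≥ 1, m = n + 2, and let f : EuclideanSpace ℝ (Fin m) → ℝ be smooth (or at least C²). Then for every x: (1/2) Σ_{i,j} ε i * ε j * (X_{ij}(X_{ij} f))(x) = Q(x)·(□f)(x) − n·(E f)(x) − (E (E f))(x), where X_{ij}(X_{ij} f) means X_{ij} applied to the function y ↦ (X_{ij} f)(y). (This is the quadratic Casimir identity C = (x,x)∂^i∂_i − n x^i∂_i − (x^i∂_i)².) -/

import Mathlib

open Finset

/-- The Minkowski signature factor: `ε 0 = 1`, `ε i = −1` for `i ≠ 0`. -/
noncomputable def eps {n : ℕ} (i : Fin (n + 2)) : ℝ := if i = 0 then 1 else -1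

/-- The partial derivative `∂_i f(x) = fderiv ℝ f x (Pi.single i 1)`. -/
noncomputable def pd {n : ℕ} (f : EuclideanSpace ℝ (Fin (n + 2)) → ℝ) (i : Fin (n + 2)) :
    EuclideanSpace ℝ (Fin (n + 2)) → ℝ :=
  fun x => fderiv ℝ f x (WithLp.toLp 2 (Pi.single i (1 : ℝ)))

/-- The rotation generator `(X_{ij} f)(x) = (ε i * x i) ∂_j f(x) − (ε j * x j) ∂_i f(x)`. -/
noncomputable def Xop {n : ℕ} (i j : Fin (n + 2))
    (f : EuclideanSpace ℝ (Fin (n + 2)) → ℝ) :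
    EuclideanSpace ℝ (Fin (n + 2)) → ℝ :=
  fun x => (eps i * x i) * pd f j x - (eps j * x j) * pd f i x

/-- The Euler operator `(E f)(x) = Σ_i x i * ∂_i f(x)`. -/
noncomputable def euler {n : ℕ} (f : EuclideanSpace ℝ (Fin (n + 2)) → ℝ) :
    EuclideanSpace ℝ (Fin (n + 2)) → ℝ :=
  fun x => ∑ i, x i * pd f i x

/-- The Minkowski wave operator `(□f)(x) = Σ_i ε i * ∂_i(∂_i f)(x)`. -/
noncomputable def box {n : ℕ} (f : EuclideanSpace ℝ (Fin (n + 2)) → ℝ) :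
    EuclideanSpace ℝ (Fin (n + 2)) → ℝ :=
  fun x => ∑ i, eps i * pd (pd f i) i x

/-- The Minkowski quadratic form `Q(x) = Σ_i ε i * (x i)²`. -/
noncomputable def Qform {n : ℕ} (x : EuclideanSpace ℝ (Fin (n + 2))) : ℝ :=
  ∑ i, eps i * (x i) ^ 2

section Aux
variable {n : ℕ}

lemma eps_cases (i : Fin (n+2)) : eps i = 1 ∨ eps i = -1 := by
  unfold eps; split_ifs <;> simp

lemma pd_diff {f : EuclideanSpace ℝ (Fin (n+2)) → ℝ} (hf : ContDiff ℝ 2 f) (j : Fin (n+2)) :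
    Differentiable ℝ (pd f j) :=
  Differentiable.clm_apply ((hf.fderiv_right (m := 1) (by norm_num)).differentiable one_ne_zero)
    (differentiable_const _)

lemma prod_diff {g : EuclideanSpace ℝ (Fin (n+2)) → ℝ} (hg : Differentiable ℝ g)
    (c : ℝ) (i : Fin (n+2)) :
    Differentiable ℝ (fun y : EuclideanSpace ℝ (Fin (n+2)) => (c * y i) * g y) :=
  ((differentiable_const c).mul (EuclideanSpace.proj (𝕜 := ℝ) i).differentiable).mul hg

lemma pd_sub {g h : EuclideanSpace ℝ (Fin (n+2)) → ℝ} {x : EuclideanSpace ℝ (Fin (n+2))}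
    (hg : DifferentiableAt ℝ g x) (hh : DifferentiableAt ℝ h x) (k : Fin (n+2)) :
    pd (fun y => g y - h y) k x = pd g k x - pd h k x := by
  unfold pd; rw [fderiv_fun_sub hg hh]; rfl

lemma pd_coord_mul {g : EuclideanSpace ℝ (Fin (n+2)) → ℝ} (hg : Differentiable ℝ g)
    (c : ℝ) (i k : Fin (n+2)) (x : EuclideanSpace ℝ (Fin (n+2))) :
    pd (fun y => (c * y i) * g y) k x =
      (c * (if i = k then (1:ℝ) else 0)) * g x + (c * x i) * pd g k x := by
  have hc : DifferentiableAt ℝ (fun y : EuclideanSpace ℝ (Fin (n+2)) => c * y i) x :=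
    ((differentiable_const c).mul (EuclideanSpace.proj (𝕜 := ℝ) i).differentiable) x
  have h1 : fderiv ℝ (fun y : EuclideanSpace ℝ (Fin (n+2)) => c * y i) x =
      c • (EuclideanSpace.proj (𝕜 := ℝ) i : EuclideanSpace ℝ (Fin (n+2)) →L[ℝ] ℝ) := by
    have h2 : (fun y : EuclideanSpace ℝ (Fin (n+2)) => c * y i)
        = fun y => c • (EuclideanSpace.proj (𝕜 := ℝ) i) y := rfl
    rw [h2, fderiv_fun_const_smul ((EuclideanSpace.proj (𝕜 := ℝ) i).differentiable x),
      (EuclideanSpace.proj (𝕜 := ℝ) i).fderiv]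
  unfold pd
  rw [fderiv_fun_mul hc (hg x)]
  simp only [ContinuousLinearMap.add_apply, ContinuousLinearMap.smul_apply, h1, smul_eq_mul]
  have h3 : (EuclideanSpace.proj (𝕜 := ℝ) i) (WithLp.toLp 2 (Pi.single k (1:ℝ))) = if i = k then (1:ℝ) else 0 := by
    simp [Pi.single_apply]
  rw [h3]
  ring

lemma pd_pd_symm {f : EuclideanSpace ℝ (Fin (n+2)) → ℝ} (hf : ContDiff ℝ 2 f)
    (i j : Fin (n+2)) (x : EuclideanSpace ℝ (Fin (n+2))) :
    pd (pd f j) i x = pd (pd f i) j x := by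
  have hd : DifferentiableAt ℝ (fderiv ℝ f) x :=
    ((hf.fderiv_right (m := 1) (by norm_num)).differentiable one_ne_zero) x
  have hev : ∀ (u v : Fin (n+2)), pd (pd f v) u x =
      (fderiv ℝ (fderiv ℝ f) x (WithLp.toLp 2 (Pi.single u 1))) (WithLp.toLp 2 (Pi.single v 1)) := by
    intro u v
    unfold pd
    rw [fderiv_clm_apply hd (differentiableAt_const _)]
    simp
  rw [hev, hev]
  exact (hf.contDiffAt (x := x)).isSymmSndFDerivAt (by simp) (WithLp.toLp 2 (Pi.single i 1)) (WithLp.toLp 2 (Pi.single j 1))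

lemma pd_Xop {f : EuclideanSpace ℝ (Fin (n+2)) → ℝ} (hf : ContDiff ℝ 2 f)
    (i j k : Fin (n+2)) (x : EuclideanSpace ℝ (Fin (n+2))) :
    pd (Xop i j f) k x =
      (eps i * (if i = k then (1:ℝ) else 0)) * pd f j x + (eps i * x i) * pd (pd f j) k x
      - ((eps j * (if j = k then (1:ℝ) else 0)) * pd f i x + (eps j * x j) * pd (pd f i) k x) := by
  have h1 : Xop i j f = fun y => (eps i * y i) * pd f j y - (eps j * y j) * pd f i y := rfl
  rw [h1, pd_sub (prod_diff (pd_diff hf j) (eps i) i x) (prod_diff (pd_diff hf i) (eps j) j x),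
    pd_coord_mul (pd_diff hf j), pd_coord_mul (pd_diff hf i)]

lemma pd_euler {f : EuclideanSpace ℝ (Fin (n+2)) → ℝ} (hf : ContDiff ℝ 2 f)
    (i : Fin (n+2)) (x : EuclideanSpace ℝ (Fin (n+2))) :
    pd (euler f) i x = pd f i x + ∑ k, x k * pd (pd f k) i x := by
  have h1 : euler f = fun y => ∑ k, ((1:ℝ) * y k) * pd f k y := by
    funext y; unfold euler; simp
  rw [h1]
  have h2 : pd (fun y => ∑ k, ((1:ℝ) * y k) * pd f k y) i x
      = ∑ k, pd (fun y => ((1:ℝ) * y k) * pd f k y) i x := by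
    show fderiv ℝ (fun y => ∑ k, ((1:ℝ) * y k) * pd f k y) x (WithLp.toLp 2 (Pi.single i 1))
        = ∑ k, fderiv ℝ (fun y => ((1:ℝ) * y k) * pd f k y) x (WithLp.toLp 2 (Pi.single i 1))
    rw [fderiv_fun_sum (fun k _ => prod_diff (pd_diff hf k) 1 k x),
      ContinuousLinearMap.sum_apply]
  rw [h2]
  have h3 : ∀ k, pd (fun y => ((1:ℝ) * y k) * pd f k y) i x
      = (if k = i then (1:ℝ) else 0) * pd f k x + x k * pd (pd f k) i x := by
    intro k
    rw [pd_coord_mul (pd_diff hf k)]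
    ring_nf
  simp only [h3]
  rw [Finset.sum_add_distrib]
  congr 1
  simp [Finset.sum_ite_eq']

end Aux

/-- The quadratic Casimir identity
`(1/2) Σ_{ij} ε i ε j X_{ij} X_{ij} f = (x,x) □f − n·E f − E(E f)`. -/
theorem quadratic_casimir_identity (n : ℕ) (hn : 1 ≤ n)
    (f : EuclideanSpace ℝ (Fin (n + 2)) → ℝ) (hf : ContDiff ℝ 2 f) :
    ∀ x : EuclideanSpace ℝ (Fin (n + 2)),
      (1 / 2 : ℝ) * ∑ i, ∑ j, eps i * eps j * Xop i j (Xop i j f) x =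
        Qform x * box f x - (n : ℝ) * euler f x - euler (euler f) x := by
  intro x
  set E := euler f x with hE
  set B := box f x with hB
  set Q := Qform x with hQ
  set SS := ∑ i, x i * (∑ j, x j * pd (pd f j) i x) with hSS
  -- key pointwise identity
  have key : ∀ i j : Fin (n+2), eps i * eps j * Xop i j (Xop i j f) x =
      (if i = j then 2 * (x i * pd f i x) else 0)
      + (eps i * eps j) * ((x i)^2 * pd (pd f j) j x)
      + (eps i * eps j) * ((x j)^2 * pd (pd f i) i x)
      - x i * pd f i x - x j * pd f j x - 2 * (x i * (x j * pd (pd f j) i x)) := by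
    intro i j
    have e1 : Xop i j (Xop i j f) x
        = (eps i * x i) * pd (Xop i j f) j x - (eps j * x j) * pd (Xop i j f) i x := rfl
    rw [e1, pd_Xop hf i j j x, pd_Xop hf i j i x]
    have hD : pd (pd f i) j x = pd (pd f j) i x := pd_pd_symm hf j i x
    rw [hD]
    by_cases hij : i = j
    · subst hij
      simp only [eq_self_iff_true, if_true]
      rcases eps_cases i with h | h <;> rw [h] <;> ring
    · simp only [if_neg hij, if_neg (Ne.symm hij), eq_self_iff_true, if_true]
      rcases eps_cases i with h | h <;> rcases eps_cases j with h' | h' <;>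
        rw [h, h'] <;> ring
  -- rewrite the double sum
  have hsum : (∑ i, ∑ j, eps i * eps j * Xop i j (Xop i j f) x)
      = 2 * E + Q * B + B * Q - ((n:ℝ)+2) * E - ((n:ℝ)+2) * E - 2 * SS := by
    have inner : ∀ i : Fin (n+2),
        (∑ j, (eps i * eps j * Xop i j (Xop i j f) x))
        = 2 * (x i * pd f i x) + (eps i * (x i)^2) * B + (eps i * pd (pd f i) i x) * Q
          - ((n:ℝ)+2) * (x i * pd f i x) - E - 2 * (x i * (∑ j, x j * pd (pd f j) i x)) := by
      intro i
      calc (∑ j, (eps i * eps j * Xop i j (Xop i j f) x))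
          = ∑ j, ((if i = j then 2 * (x i * pd f i x) else 0)
            + (eps i * eps j) * ((x i)^2 * pd (pd f j) j x)
            + (eps i * eps j) * ((x j)^2 * pd (pd f i) i x)
            - x i * pd f i x - x j * pd f j x
            - 2 * (x i * (x j * pd (pd f j) i x))) :=
          Finset.sum_congr rfl fun j _ => key i j
        _ = (∑ j, (if i = j then 2 * (x i * pd f i x) else 0))
            + (∑ j, (eps i * eps j) * ((x i)^2 * pd (pd f j) j x))
            + (∑ j, (eps i * eps j) * ((x j)^2 * pd (pd f i) i x))
            - (∑ j : Fin (n+2), x i * pd f i x) - (∑ j, x j * pd f j x)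
            - (∑ j, 2 * (x i * (x j * pd (pd f j) i x))) := by
          simp [Finset.sum_add_distrib, Finset.sum_sub_distrib]
        _ = 2 * (x i * pd f i x) + (eps i * (x i)^2) * B + (eps i * pd (pd f i) i x) * Q
            - ((n:ℝ)+2) * (x i * pd f i x) - E - 2 * (x i * (∑ j, x j * pd (pd f j) i x)) := by
          have t1 : (∑ j, (if i = j then 2 * (x i * pd f i x) else 0))
              = 2 * (x i * pd f i x) := by simp
          have t2 : (∑ j, (eps i * eps j) * ((x i)^2 * pd (pd f j) j x))
              = (eps i * (x i)^2) * B := by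
            rw [hB]; unfold _root_.box
            rw [Finset.mul_sum]
            exact Finset.sum_congr rfl fun j _ => by ring
          have t3 : (∑ j, (eps i * eps j) * ((x j)^2 * pd (pd f i) i x))
              = (eps i * pd (pd f i) i x) * Q := by
            rw [hQ]; unfold Qform
            rw [Finset.mul_sum]
            exact Finset.sum_congr rfl fun j _ => by ring
          have t4 : (∑ _j : Fin (n+2), x i * pd f i x)
              = ((n:ℝ)+2) * (x i * pd f i x) := by
            rw [Finset.sum_const, Finset.card_univ, Fintype.card_fin, nsmul_eq_mul]
            push_cast; ring
          have t5 : (∑ j, x j * pd f j x) = E := by rw [hE]; rfl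
          have t6 : (∑ j, 2 * (x i * (x j * pd (pd f j) i x)))
              = 2 * (x i * (∑ j, x j * pd (pd f j) i x)) := by
            rw [Finset.mul_sum, Finset.mul_sum]
          rw [t1, t2, t3, t4, t5, t6]
    calc (∑ i, ∑ j, eps i * eps j * Xop i j (Xop i j f) x)
        = ∑ i, (2 * (x i * pd f i x) + (eps i * (x i)^2) * B + (eps i * pd (pd f i) i x) * Q
          - ((n:ℝ)+2) * (x i * pd f i x) - E - 2 * (x i * (∑ j, x j * pd (pd f j) i x))) :=
        Finset.sum_congr rfl fun i _ => inner i
      _ = (∑ i, 2 * (x i * pd f i x)) + (∑ i, (eps i * (x i)^2) * B)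
          + (∑ i, (eps i * pd (pd f i) i x) * Q)
          - (∑ i, ((n:ℝ)+2) * (x i * pd f i x)) - (∑ i : Fin (n+2), E)
          - (∑ i, 2 * (x i * (∑ j, x j * pd (pd f j) i x))) := by
        simp [Finset.sum_add_distrib, Finset.sum_sub_distrib]
      _ = 2 * E + Q * B + B * Q - ((n:ℝ)+2) * E - ((n:ℝ)+2) * E - 2 * SS := by
        have s1 : (∑ i, 2 * (x i * pd f i x)) = 2 * E := by
          rw [hE]; unfold euler; rw [Finset.mul_sum]
        have s2 : (∑ i, (eps i * (x i)^2) * B) = Q * B := by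
          rw [hQ]; unfold Qform; rw [Finset.sum_mul]
        have s3 : (∑ i, (eps i * pd (pd f i) i x) * Q) = B * Q := by
          rw [hB]; unfold _root_.box; rw [Finset.sum_mul]
        have s4 : (∑ i, ((n:ℝ)+2) * (x i * pd f i x)) = ((n:ℝ)+2) * E := by
          rw [hE]; unfold euler; rw [Finset.mul_sum]
        have s5 : (∑ _i : Fin (n+2), E) = ((n:ℝ)+2) * E := by
          rw [Finset.sum_const, Finset.card_univ, Fintype.card_fin, nsmul_eq_mul]
          push_cast; ring
        have s6 : (∑ i, 2 * (x i * (∑ j, x j * pd (pd f j) i x))) = 2 * SS := by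
          rw [hSS, Finset.mul_sum]
        rw [s1, s2, s3, s4, s5, s6]
  have hEE : euler (euler f) x = E + SS := by
    have : euler (euler f) x = ∑ i, x i * pd (euler f) i x := rfl
    rw [this]
    calc (∑ i, x i * pd (euler f) i x)
        = ∑ i, (x i * pd f i x + x i * (∑ k, x k * pd (pd f k) i x)) :=
        Finset.sum_congr rfl fun i _ => by rw [pd_euler hf i x]; ring
      _ = E + SS := by
        rw [Finset.sum_add_distrib, hE, hSS]; rfl
  rw [hsum, hEE]
  ring
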